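/- Let f_1, …, f_n : ℕ → ℝ be concave functions and let F(X) = ∑_{i=1}^n f_i(c_X(i)) for a family X of intervals over {1,…,n}. Let S and S' be families of intervals over {1,…,n}, let U be their multiset sum (so |U| = |S| + |S'|), let U* = {J_1, …, J_{|U|}} be the canonical form of U (indexed so that left endpoints and right endpoints are both non-decreasing in the index), and let A* = {J_j : j even} and B* = {J_j : j odd}. Then F(A*) + F(B*) ≥ F(S) + F(S'). -/

import Mathlib

/-- The coverage of a point `i` by a family `X` of intervals (pairs `(l, r)` identified
with `{l,…,r}`): the number of intervals in `X`, with multiplicity, containing `i`. -/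
def coverage (X : Multiset (ℕ × ℕ)) (i : ℕ) : ℕ :=
  (X.filter fun p => p.1 ≤ i ∧ i ≤ p.2).card

/-- The canonical form `U*` of a family `U` of intervals, as a list `J_1, …, J_u`
(0-based: `J_j` is entry `j-1`): pair the `j`-th smallest left endpoint with the
`j`-th smallest right endpoint; both endpoint sequences are non-decreasing in the
index. -/
def canonicalList (U : Multiset (ℕ × ℕ)) : List (ℕ × ℕ) :=
  (Multiset.sort (U.map Prod.fst) (· ≤ ·)).zip
    (Multiset.sort (U.map Prod.snd) (· ≤ ·))


-- concavity steps
lemma diff_step (f : ℕ → ℝ) (hf : ∀ t, f t + f (t+2) ≤ 2 * f (t+1)) :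
    ∀ (m t : ℕ), f t + f (t + m + 2) ≤ f (t + 1) + f (t + m + 1) := by
  intro m
  induction m with
  | zero => intro t; have := hf t; simpa using by linarith [hf t]
  | succ m ih =>
    intro t
    have h1 := ih t
    have h2 := hf (t + m + 1)
    have e1 : t + m + 1 + 2 = t + (m+1) + 2 := by ring
    have e2 : t + m + 1 + 1 = t + m + 2 := by ring
    rw [e1, e2] at h2
    have e3 : t + (m+1) + 1 = t + m + 2 := by ring
    rw [e3]
    linarith

lemma chain (f : ℕ → ℝ) (hf : ∀ t, f t + f (t+2) ≤ 2 * f (t+1)) :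
    ∀ (k s : ℕ), f s + f (s + k) ≤ f (s + k / 2) + f (s + (k+1) / 2) := by
  intro k
  induction k using Nat.strong_induction_on with
  | _ k ih =>
    match k with
    | 0 => intro s; simp
    | 1 => intro s; simp
    | (m+2) =>
      intro s
      have h1 := diff_step f hf m s
      have h2 := ih m (by omega) (s+1)
      have e1 : s + 1 + m / 2 = s + (m+2)/2 := by omega
      have e2 : s + 1 + (m+1) / 2 = s + (m+2+1)/2 := by omega
      have e3 : s + 1 + m = s + m + 1 := by ring
      rw [e1, e2, e3] at h2
      have e0 : s + (m+2) = s + m + 2 := by ring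
      rw [e0]
      linarith

lemma conc_main (f : ℕ → ℝ) (hf : ∀ t, f t + f (t+2) ≤ 2 * f (t+1))
    (s s' x y : ℕ) (hsum : x + y = s + s') (hxy : y ≤ x + 1) (hyx : x ≤ y + 1) :
    f s + f s' ≤ f x + f y := by
  rcases le_total s s' with h | h
  · have hc := chain f hf (s' - s) s
    have e : s + (s' - s) = s' := by omega
    rw [e] at hc
    have : (x = s + (s'-s)/2 ∧ y = s + ((s'-s)+1)/2) ∨
           (y = s + (s'-s)/2 ∧ x = s + ((s'-s)+1)/2) := by omega
    rcases this with ⟨hx, hy⟩ | ⟨hx, hy⟩ <;> rw [hx, hy] <;> linarith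
  · have hc := chain f hf (s - s') s'
    have e : s' + (s - s') = s := by omega
    rw [e] at hc
    have : (x = s' + (s-s')/2 ∧ y = s' + ((s-s')+1)/2) ∨
           (y = s' + (s-s')/2 ∧ x = s' + ((s-s')+1)/2) := by omega
    rcases this with ⟨hx, hy⟩ | ⟨hx, hy⟩ <;> rw [hx, hy] <;> linarith

lemma split_count (U : Multiset (ℕ × ℕ)) (hU : ∀ p ∈ U, p.1 ≤ p.2) (i : ℕ) :
    Multiset.countP (fun p : ℕ × ℕ => p.1 ≤ i) U
      = coverage U i + Multiset.countP (fun p : ℕ × ℕ => p.2 < i) U := by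
  rw [coverage, ← Multiset.countP_eq_card_filter]
  induction U using Multiset.induction_on with
  | empty => simp
  | cons p s ih =>
    have hp := hU p (Multiset.mem_cons_self p s)
    have hs : ∀ q ∈ s, q.1 ≤ q.2 := fun q hq => hU q (Multiset.mem_cons_of_mem hq)
    simp only [Multiset.countP_cons, ih hs]
    split_ifs <;> omega

lemma coverage_coe (l : List (ℕ × ℕ)) (i : ℕ) :
    coverage (↑l) i = l.countP (fun p => decide (p.1 ≤ i ∧ i ≤ p.2)) := by
  rw [coverage, ← Multiset.countP_eq_card_filter, Multiset.coe_countP]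

-- from aux2
lemma count_parity (c : ℕ) (hc : c < 2) :
    ∀ (u b : ℕ), (List.range u).countP (fun j => decide (j % 2 = c) && decide (b ≤ j))
      = (u + 1 - c) / 2 - (b + 1 - c) / 2 := by
  intro u
  induction u with
  | zero => intro b; simp; omega
  | succ u ih =>
    intro b
    rw [List.range_succ, List.countP_append, ih b]
    simp only [List.countP_cons, List.countP_nil]
    interval_cases c <;> split_ifs <;> simp_all <;> omega

lemma count_cutoff (P : ℕ → Bool) (a u : ℕ) (h : a ≤ u) :
    (List.range u).countP (fun j => P j && decide (j < a)) = (List.range a).countP P := by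
  obtain ⟨t, rfl⟩ := Nat.exists_eq_add_of_le h
  rw [List.range_add, List.countP_append]
  have h2 : (List.map (a + ·) (List.range t)).countP (fun j => P j && decide (j < a)) = 0 := by
    rw [List.countP_eq_zero]
    intro x hx
    simp only [List.mem_map] at hx
    obtain ⟨y, _, rfl⟩ := hx
    simp
  rw [h2, Nat.add_zero]
  apply List.countP_congr
  intro x hx
  simp only [List.mem_range] at hx
  simp [hx]

lemma sorted_index (p : ℕ → Prop) [DecidablePred p] (hp : ∀ x y, x ≤ y → p y → p x) :
    ∀ (l : List ℕ), l.Pairwise (· ≤ ·) → ∀ (j : ℕ) (hj : j < l.length),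
      (p (l.get ⟨j, hj⟩) ↔ j < l.countP (fun x => decide (p x))) := by
  intro l
  induction l with
  | nil => intro _ j hj; simp at hj
  | cons x t ih =>
    intro hs j hj
    rw [List.pairwise_cons] at hs
    obtain ⟨hx, ht⟩ := hs
    by_cases hpx : p x
    · have hcount : (x :: t).countP (fun y => decide (p y)) = t.countP (fun y => decide (p y)) + 1 := by
        rw [List.countP_cons]; simp [hpx]
      rw [hcount]
      match j with
      | 0 => simp [hpx]
      | (j+1) =>
        simp only [List.get_cons_succ]
        rw [ih ht j (by simpa using hj)]
        omega
    · have htz : t.countP (fun y => decide (p y)) = 0 := by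
        rw [List.countP_eq_zero]
        intro y hy
        simp only [decide_eq_true_eq]
        exact fun hpy => hpx (hp x y (hx y hy) hpy)
      have hcount : (x :: t).countP (fun y => decide (p y)) = 0 := by
        rw [List.countP_cons, htz]; simp [hpx]
      rw [hcount]
      match j with
      | 0 => simp [hpx]
      | (j+1) =>
        simp only [List.get_cons_succ]
        constructor
        · intro hpy
          exact absurd (hp x _ (hx _ (List.get_mem t _)) hpy) hpx
        · omega

lemma countP_enumFrom {α : Type*} (P : α × ℕ → Bool) (d : α) :
    ∀ (l : List α) (k : ℕ), (l.zipIdx k).countP P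
      = (List.range l.length).countP (fun j => P (l.getD j d, k + j)) := by
  intro l
  induction l with
  | nil => intro k; simp
  | cons x t ih =>
    intro k
    rw [List.zipIdx_cons, List.countP_cons, ih (k+1)]
    simp only [List.length_cons, List.range_succ_eq_map, List.countP_cons, List.countP_map]
    have heq : (List.range t.length).countP (fun j => P (t.getD j d, k + 1 + j))
        = (List.range t.length).countP ((fun j => P ((x :: t).getD j d, k + j)) ∘ Nat.succ) := by
      apply List.countP_congr
      intro a _
      have : k + 1 + a = k + Nat.succ a := by omega
      simp only [Function.comp_apply, List.getD_cons_succ, this]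
    rw [heq]
    simp

lemma coverage_canonical (U : Multiset (ℕ × ℕ)) (i c : ℕ) (hc : c < 2) :
    coverage ((((canonicalList U).zipIdx.filter
        fun p => p.2 % 2 = c).map Prod.fst : List (ℕ × ℕ)) : Multiset (ℕ × ℕ)) i
      = (Multiset.countP (fun p : ℕ × ℕ => p.1 ≤ i) U + 1 - c) / 2
        - (Multiset.countP (fun p : ℕ × ℕ => p.2 < i) U + 1 - c) / 2 := by
  set L := Multiset.sort (U.map Prod.fst) (· ≤ ·) with hLdef
  set R := Multiset.sort (U.map Prod.snd) (· ≤ ·) with hRdef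
  set a := Multiset.countP (fun p : ℕ × ℕ => p.1 ≤ i) U with hadef
  set b := Multiset.countP (fun p : ℕ × ℕ => p.2 < i) U with hbdef
  have hLlen : L.length = Multiset.card U := by
    rw [hLdef, Multiset.length_sort, Multiset.card_map]
  have hRlen : R.length = Multiset.card U := by
    rw [hRdef, Multiset.length_sort, Multiset.card_map]
  have hllen : (canonicalList U).length = Multiset.card U := by
    rw [canonicalList, List.length_zip, ← hLdef, ← hRdef, hLlen, hRlen, min_self]
  have hLcount : L.countP (fun x => decide (x ≤ i)) = a := by
    rw [hadef, ← Multiset.coe_countP, hLdef, Multiset.sort_eq, Multiset.countP_map,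
      Multiset.countP_eq_card_filter]
  have hRcount : R.countP (fun x => decide (x < i)) = b := by
    rw [hbdef, ← Multiset.coe_countP, hRdef, Multiset.sort_eq, Multiset.countP_map,
      Multiset.countP_eq_card_filter]
  have hLsorted : L.Pairwise (· ≤ ·) := Multiset.pairwise_sort _ _
  have hRsorted : R.Pairwise (· ≤ ·) := Multiset.pairwise_sort _ _
  have hau : a ≤ Multiset.card U := Multiset.countP_le_card _ _
  -- main computation
  rw [coverage_coe, List.countP_map, List.countP_filter]
  have henum : (canonicalList U).zipIdx = (canonicalList U).zipIdx 0 := rfl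
  rw [henum, countP_enumFrom _ ((0 : ℕ), (0 : ℕ)), hllen]
  rw [← count_parity c hc a b, ← count_cutoff (fun j => decide (j % 2 = c) && decide (b ≤ j)) a (Multiset.card U) hau]
  apply List.countP_congr
  intro j hj
  rw [List.mem_range] at hj
  have hjl : j < (canonicalList U).length := by rw [hllen]; exact hj
  have hjL : j < L.length := by rw [hLlen]; exact hj
  have hjR : j < R.length := by rw [hRlen]; exact hj
  have hget : (canonicalList U).getD j (0, 0) = (L.get ⟨j, hjL⟩, R.get ⟨j, hjR⟩) := by
    rw [List.getD_eq_getElem _ _ hjl]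
    simp only [canonicalList, ← hLdef, ← hRdef]
    rw [List.getElem_zip]
    simp
  have hLiff : (L.get ⟨j, hjL⟩ ≤ i ↔ j < a) := by
    rw [← hLcount]
    exact sorted_index (· ≤ i) (fun x y hxy h => le_trans hxy h) L hLsorted j hjL
  have hRiff : (R.get ⟨j, hjR⟩ < i ↔ j < b) := by
    rw [← hRcount]
    exact sorted_index (· < i) (fun x y hxy h => lt_of_le_of_lt hxy h) R hRsorted j hjR
  simp only [hget, Function.comp_apply, Bool.and_eq_true, decide_eq_true_eq, Nat.zero_add]
  constructor
  · rintro ⟨⟨h1, h2⟩, h3⟩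
    refine ⟨⟨h3, ?_⟩, hLiff.mp h1⟩
    by_contra hb
    exact absurd (hRiff.mp (by omega)) (by omega)
  · rintro ⟨⟨h1, h2⟩, h3⟩
    refine ⟨⟨hLiff.mpr h3, ?_⟩, h1⟩
    by_contra hr
    have := hRiff.mp (by omega)
    omega

/-- Let `f_1, …, f_n : ℕ → ℝ` be concave and
`F X = ∑_{i=1}^n f_i (c_X(i))`.  Let `S, S'` be families of intervals over `{1,…,n}`,
`U = S + S'` their multiset sum, `U* = {J_1, …, J_{|U|}}` its canonical form, and let
`A*` consist of the even-indexed (1-based; i.e. 0-based odd positions) and `B*` of the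
odd-indexed intervals of `U*`.  Then `F A* + F B* ≥ F S + F S'`. -/
theorem stmt_7 (n : ℕ) (f : ℕ → ℕ → ℝ)
    (hconc : ∀ i ∈ Finset.Icc 1 n, ∀ t : ℕ, f i t + f i (t + 2) ≤ 2 * f i (t + 1))
    (S S' : Multiset (ℕ × ℕ))
    (hS : ∀ p ∈ S, 1 ≤ p.1 ∧ p.1 ≤ p.2 ∧ p.2 ≤ n)
    (hS' : ∀ p ∈ S', 1 ≤ p.1 ∧ p.1 ≤ p.2 ∧ p.2 ≤ n)
    (A B : Multiset (ℕ × ℕ))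
    (hA : A = ((((canonicalList (S + S')).zipIdx.filter
      fun p => p.2 % 2 = 1).map Prod.fst : List (ℕ × ℕ)) : Multiset (ℕ × ℕ)))
    (hB : B = ((((canonicalList (S + S')).zipIdx.filter
      fun p => p.2 % 2 = 0).map Prod.fst : List (ℕ × ℕ)) : Multiset (ℕ × ℕ))) :
    (∑ i ∈ Finset.Icc 1 n, f i (coverage S i)) +
      (∑ i ∈ Finset.Icc 1 n, f i (coverage S' i)) ≤
    (∑ i ∈ Finset.Icc 1 n, f i (coverage A i)) +
      (∑ i ∈ Finset.Icc 1 n, f i (coverage B i)) := by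
  have hU : ∀ p ∈ S + S', p.1 ≤ p.2 := by
    intro p hp
    rw [Multiset.mem_add] at hp
    rcases hp with hp | hp
    · exact (hS p hp).2.1
    · exact (hS' p hp).2.1
  rw [← Finset.sum_add_distrib, ← Finset.sum_add_distrib]
  apply Finset.sum_le_sum
  intro i hi
  set a := Multiset.countP (fun p : ℕ × ℕ => p.1 ≤ i) (S + S') with hadef
  set b := Multiset.countP (fun p : ℕ × ℕ => p.2 < i) (S + S') with hbdef
  have hsplit : a = coverage (S + S') i + b := split_count (S + S') hU i
  have hcovadd : coverage (S + S') i = coverage S i + coverage S' i := by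
    rw [coverage, coverage, coverage, Multiset.filter_add, Multiset.card_add]
  have hAcov : coverage A i = (a + 1 - 1) / 2 - (b + 1 - 1) / 2 := by
    rw [hA]; exact coverage_canonical (S + S') i 1 (by omega)
  have hBcov : coverage B i = (a + 1 - 0) / 2 - (b + 1 - 0) / 2 := by
    rw [hB]; exact coverage_canonical (S + S') i 0 (by omega)
  rw [hAcov, hBcov]
  apply conc_main (f i) (hconc i hi)
  · omega
  · omega
  · omega
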